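/- Fix ε, δ with 0 < ε < δ < 1 and an integer m with 1 ≤ m ≤ M, and for T > 0 let χ_{m,ε,δ}(T) = c_{m,ε}(T)/c_{m,δ}(T) be the response coefficient of layer m when the total amount in the top layer equals T, where c_{m,ε}(T) = ψ_0^{(T)}(ψ_m^{-1}(ε ψ_m(ρ_M(T)))) and ψ_0^{(T)}(y) = d y / (T − λ_1 y − μ_1 ψ_1(y)). Then χ_{m,ε,δ}(T) → ε(1−δ)/(δ(1−ε)) as T → 0⁺; and as T → ∞, χ_{m,ε,δ}(T) → (1−δ)/(1−ε) if m = 1, χ_{m,ε,δ}(T) → ψ_m^{-1}(ε ψ_m(ξ_1))/ψ_m^{-1}(δ ψ_m(ξ_1)) if 1 < m < M, and χ_{M,ε,δ}(T) → ε/δ if m = M. -/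

import Mathlib

open Filter Set Topology

set_option maxHeartbeats 2000000

theorem stmt19
    (M : ℕ) (hM : 2 ≤ M)
    (d : ℝ) (hd : 0 < d)
    (u v w : ℕ → ℝ)
    (hu : ∀ m, 1 ≤ m → m ≤ M - 1 → 0 < u m)
    (hv : ∀ m, 1 ≤ m → m ≤ M - 1 → 0 < v m)
    (hw : ∀ m, 1 ≤ m → m ≤ M - 1 → 0 < w m)
    (S lam mu : ℕ → ℝ)
    (hS : ∀ m, 2 ≤ m → m ≤ M → 0 < S m)
    (hlam : ∀ m, 1 ≤ m → m ≤ M → 0 < lam m)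
    (hmu : ∀ m, 1 ≤ m → m ≤ M → 0 < mu m)
    (ψ : ℕ → ℝ → ℝ)
    (hψM : ∀ y, ψ M y = y)
    (hψrec : ∀ m, 2 ≤ m → m ≤ M → ∀ y,
      ψ (m - 1) y = d * (v (m - 1) / w (m - 1) + 1) * y /
        (u (m - 1) * (S m - lam m * y - mu m * ψ m y)))
    (ξ : ℕ → ℝ)
    (hξpos : ∀ m, 1 ≤ m → m ≤ M - 1 → 0 < ξ m)
    (hξlt : ∀ m, 1 ≤ m → m + 1 ≤ M - 1 → ξ m < ξ (m + 1))
    (hξzero : ∀ m, 1 ≤ m → m ≤ M - 1 →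
      S (m + 1) - lam (m + 1) * ξ m - mu (m + 1) * ψ (m + 1) (ξ m) = 0)
    (hξuniq : ∀ m, 1 ≤ m → m ≤ M - 1 → ∀ y, 0 < y → (m + 1 ≤ M - 1 → y < ξ (m + 1)) →
      S (m + 1) - lam (m + 1) * y - mu (m + 1) * ψ (m + 1) y = 0 → y = ξ m)
    (hψprop : ∀ m, 1 ≤ m → m ≤ M →
      ContinuousOn (ψ m) {y : ℝ | 0 ≤ y ∧ (m ≤ M - 1 → y < ξ m)} ∧
      StrictMonoOn (ψ m) {y : ℝ | 0 ≤ y ∧ (m ≤ M - 1 → y < ξ m)} ∧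
      (∀ y, 0 ≤ y → (m ≤ M - 1 → y < ξ m) → 0 ≤ ψ m y) ∧
      ψ m 0 = 0)
    (hψtop : ∀ m, 1 ≤ m → m ≤ M - 1 → Tendsto (ψ m) (𝓝[<] (ξ m)) atTop)
    (ψinv : ℕ → ℝ → ℝ)
    (hinv : ∀ m, 1 ≤ m → m ≤ M →
      (∀ y, 0 ≤ y → (m ≤ M - 1 → y < ξ m) → ψinv m (ψ m y) = y) ∧
      (∀ x, 0 ≤ x → ψ m (ψinv m x) = x ∧ 0 ≤ ψinv m x ∧ (m ≤ M - 1 → ψinv m x < ξ m)))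
    (ρ : ℝ → ℝ)
    (hρ : ∀ T, 0 ≤ T → ρ T ∈ Set.Ico 0 (ξ 1) ∧ lam 1 * ρ T + mu 1 * ψ 1 (ρ T) = T)
    (ε δ : ℝ) (hε : 0 < ε) (hεδ : ε < δ) (hδ : δ < 1)
    (m : ℕ) (hm1 : 1 ≤ m) (hmM : m ≤ M) :
    Tendsto (fun T =>
      (d * ψinv m (ε * ψ m (ρ T)) /
        (T - lam 1 * ψinv m (ε * ψ m (ρ T)) - mu 1 * ψ 1 (ψinv m (ε * ψ m (ρ T))))) /
      (d * ψinv m (δ * ψ m (ρ T)) /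
        (T - lam 1 * ψinv m (δ * ψ m (ρ T)) - mu 1 * ψ 1 (ψinv m (δ * ψ m (ρ T))))))
      (𝓝[>] 0) (𝓝 (ε * (1 - δ) / (δ * (1 - ε)))) ∧
    (m = 1 → Tendsto (fun T =>
      (d * ψinv m (ε * ψ m (ρ T)) /
        (T - lam 1 * ψinv m (ε * ψ m (ρ T)) - mu 1 * ψ 1 (ψinv m (ε * ψ m (ρ T))))) /
      (d * ψinv m (δ * ψ m (ρ T)) /
        (T - lam 1 * ψinv m (δ * ψ m (ρ T)) - mu 1 * ψ 1 (ψinv m (δ * ψ m (ρ T)))))) atTop (𝓝 ((1 - δ) / (1 - ε)))) ∧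
    (1 < m → m < M → Tendsto (fun T =>
      (d * ψinv m (ε * ψ m (ρ T)) /
        (T - lam 1 * ψinv m (ε * ψ m (ρ T)) - mu 1 * ψ 1 (ψinv m (ε * ψ m (ρ T))))) /
      (d * ψinv m (δ * ψ m (ρ T)) /
        (T - lam 1 * ψinv m (δ * ψ m (ρ T)) - mu 1 * ψ 1 (ψinv m (δ * ψ m (ρ T)))))) atTop
      (𝓝 (ψinv m (ε * ψ m (ξ 1)) / ψinv m (δ * ψ m (ξ 1))))) ∧
    (m = M → Tendsto (fun T =>
      (d * ψinv m (ε * ψ m (ρ T)) /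
        (T - lam 1 * ψinv m (ε * ψ m (ρ T)) - mu 1 * ψ 1 (ψinv m (ε * ψ m (ρ T))))) /
      (d * ψinv m (δ * ψ m (ρ T)) /
        (T - lam 1 * ψinv m (δ * ψ m (ρ T)) - mu 1 * ψ 1 (ψinv m (δ * ψ m (ρ T)))))) atTop (𝓝 (ε / δ))) := by
  -- basic positivity
  have hM1 : (1:ℕ) ≤ M - 1 := by omega
  have hξ1pos : 0 < ξ 1 := hξpos 1 le_rfl hM1
  have hlam1 : 0 < lam 1 := hlam 1 le_rfl (by omega)
  have hmu1 : 0 < mu 1 := hmu 1 le_rfl (by omega)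
  have hδ0 : 0 < δ := lt_trans hε hεδ
  have hε1 : ε < 1 := lt_trans hεδ hδ
  -- chain of ξ's
  have hξchain : ∀ j, 1 ≤ j → j ≤ M - 1 → ξ 1 ≤ ξ j ∧ (2 ≤ j → ξ 1 < ξ j) := by
    intro j h1 h2
    induction j with
    | zero => omega
    | succ n ih =>
      rcases Nat.lt_or_ge 1 (n+1) with h | h
      · have hn1 : 1 ≤ n := by omega
        have hlt := hξlt n hn1 (by omega)
        have := (ih hn1 (by omega)).1
        exact ⟨le_of_lt (lt_of_le_of_lt this hlt), fun _ => lt_of_le_of_lt this hlt⟩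
      · have hn : n + 1 = 1 := by omega
        rw [hn]
        exact ⟨le_rfl, by omega⟩
  -- extraction of ψ properties
  have hmono : ∀ m', 1 ≤ m' → m' ≤ M →
      StrictMonoOn (ψ m') {y : ℝ | 0 ≤ y ∧ (m' ≤ M - 1 → y < ξ m')} :=
    fun m' h1 h2 => (hψprop m' h1 h2).2.1
  have hcont : ∀ m', 1 ≤ m' → m' ≤ M →
      ContinuousOn (ψ m') {y : ℝ | 0 ≤ y ∧ (m' ≤ M - 1 → y < ξ m')} :=
    fun m' h1 h2 => (hψprop m' h1 h2).1
  have hzero : ∀ m', 1 ≤ m' → m' ≤ M → ψ m' 0 = 0 :=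
    fun m' h1 h2 => (hψprop m' h1 h2).2.2.2
  have hψpos : ∀ m', 1 ≤ m' → m' ≤ M → ∀ y : ℝ, 0 < y → (m' ≤ M - 1 → y < ξ m') → 0 < ψ m' y := by
    intro m' h1 h2 y hy hylt
    have h0 : (0:ℝ) ∈ {y : ℝ | 0 ≤ y ∧ (m' ≤ M - 1 → y < ξ m')} := ⟨le_rfl, fun h => hξpos m' h1 h⟩
    have := hmono m' h1 h2 h0 ⟨hy.le, hylt⟩ hy
    rwa [hzero m' h1 h2] at this
  have hlt_of_ψlt : ∀ m', 1 ≤ m' → m' ≤ M → ∀ p q : ℝ,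
      (0 ≤ p ∧ (m' ≤ M - 1 → p < ξ m')) → (0 ≤ q ∧ (m' ≤ M - 1 → q < ξ m')) →
      ψ m' p < ψ m' q → p < q := by
    intro m' h1 h2 p q hp hq hlt
    by_contra h
    push_neg at h
    exact absurd hlt (not_lt.2 ((hmono m' h1 h2).monotoneOn hq hp h))
  -- slope at 0
  have hkaux : ∀ j : ℕ, j ≤ M - 1 → ∃ c : ℝ, 0 < c ∧
      Tendsto (fun y => ψ (M - j) y / y) (𝓝[>] (0:ℝ)) (𝓝 c) := by
    intro j
    induction j with
    | zero =>
      intro _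
      refine ⟨1, one_pos, ?_⟩
      refine Tendsto.congr' ?_ tendsto_const_nhds
      filter_upwards [self_mem_nhdsWithin] with y hy
      simp [hψM y, div_self (ne_of_gt (mem_Ioi.mp hy))]
    | succ j ih =>
      intro hj
      obtain ⟨c, hc, hct⟩ := ih (by omega)
      have h2 : 2 ≤ M - j := by omega
      have hle : M - j ≤ M := by omega
      have h1' : 1 ≤ M - j - 1 := by omega
      have hle' : M - j - 1 ≤ M - 1 := by omega
      have hid : Tendsto (fun y : ℝ => y) (𝓝[>] (0:ℝ)) (𝓝 0) :=
        tendsto_id.mono_left nhdsWithin_le_nhds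
      have hψ0 : Tendsto (fun y => ψ (M - j) y) (𝓝[>] (0:ℝ)) (𝓝 0) := by
        have h := hct.mul hid
        rw [mul_zero] at h
        refine h.congr' ?_
        filter_upwards [self_mem_nhdsWithin] with y hy
        exact div_mul_cancel₀ _ (ne_of_gt hy)
      have hu' := hu (M - j - 1) h1' hle'
      have hS' := hS (M - j) h2 hle
      have hdent : Tendsto (fun y => u (M - j - 1) * (S (M - j) - lam (M - j) * y - mu (M - j) * ψ (M - j) y))
          (𝓝[>] (0:ℝ)) (𝓝 (u (M - j - 1) * S (M - j))) := by
        have hin : Tendsto (fun y => S (M - j) - lam (M - j) * y - mu (M - j) * ψ (M - j) y)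
            (𝓝[>] (0:ℝ)) (𝓝 (S (M - j) - lam (M - j) * 0 - mu (M - j) * 0)) :=
          (tendsto_const_nhds.sub (tendsto_const_nhds.mul hid)).sub (tendsto_const_nhds.mul hψ0)
        have h := hin.const_mul (u (M - j - 1))
        simpa using h
      have hK : 0 < d * (v (M - j - 1) / w (M - j - 1) + 1) :=
        mul_pos hd (add_pos (div_pos (hv _ h1' hle') (hw _ h1' hle')) one_pos)
      refine ⟨d * (v (M - j - 1) / w (M - j - 1) + 1) / (u (M - j - 1) * S (M - j)),
        div_pos hK (mul_pos hu' hS'), ?_⟩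
      have hne : u (M - j - 1) * S (M - j) ≠ 0 := (mul_pos hu' hS').ne'
      have hlim := (tendsto_const_nhds :
        Tendsto (fun _ : ℝ => d * (v (M - j - 1) / w (M - j - 1) + 1)) (𝓝[>] (0:ℝ))
          (𝓝 (d * (v (M - j - 1) / w (M - j - 1) + 1)))).div hdent hne
      refine hlim.congr' ?_
      filter_upwards [self_mem_nhdsWithin] with y hy
      have hidx : M - (j + 1) = M - j - 1 := by omega
      simp only [Pi.div_apply]
      rw [hidx, hψrec (M - j) h2 hle y]
      rcases eq_or_ne (S (M - j) - lam (M - j) * y - mu (M - j) * ψ (M - j) y) 0 with hQ | hQ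
      · rw [hQ]; simp
      · field_simp [(hw _ h1' hle').ne', hu'.ne', ne_of_gt (mem_Ioi.mp hy), hQ]

  have hkm' : ∀ m', 1 ≤ m' → m' ≤ M → ∃ c : ℝ, 0 < c ∧
      Tendsto (fun y => ψ m' y / y) (𝓝[>] (0:ℝ)) (𝓝 c) := by
    intro m' h1 h2
    have := hkaux (M - m') (by omega)
    rwa [show M - (M - m') = m' from by omega] at this
  -- continuity of the inverse via monotonicity
  have hinvt : ∀ m', 1 ≤ m' → m' ≤ M → ∀ t : ℝ, 0 ≤ t → (m' ≤ M - 1 → t < ξ m') →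
      ∀ l : Filter ℝ, ∀ g : ℝ → ℝ, Tendsto g l (𝓝 (ψ m' t)) → (∀ᶠ x in l, 0 ≤ g x) →
      Tendsto (fun x => ψinv m' (g x)) l (𝓝 t) := by
    intro m' h1 h2 t ht htlt l g hgt hg0
    have ht' : t ∈ {y : ℝ | 0 ≤ y ∧ (m' ≤ M - 1 → y < ξ m')} := ⟨ht, htlt⟩
    have hprops : ∀ᶠ x in l, ψ m' (ψinv m' (g x)) = g x ∧ 0 ≤ ψinv m' (g x) ∧
        (m' ≤ M - 1 → ψinv m' (g x) < ξ m') := by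
      filter_upwards [hg0] with x hx
      exact (hinv m' h1 h2).2 (g x) hx
    rw [tendsto_order]
    constructor
    · intro c hc
      rcases lt_or_ge c 0 with hc0 | hc0
      · filter_upwards [hprops] with x hx
        exact lt_of_lt_of_le hc0 hx.2.1
      · have hcD : c ∈ {y : ℝ | 0 ≤ y ∧ (m' ≤ M - 1 → y < ξ m')} :=
          ⟨hc0, fun hh => lt_trans hc (htlt hh)⟩
        have hψc : ψ m' c < ψ m' t := hmono m' h1 h2 hcD ht' hc
        filter_upwards [hprops, hgt.eventually (eventually_gt_nhds hψc)] with x hx hx2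
        by_contra hcon
        push_neg at hcon
        have hle := (hmono m' h1 h2).monotoneOn ⟨hx.2.1, hx.2.2⟩ hcD hcon
        rw [hx.1] at hle
        exact absurd hx2 (not_lt.2 hle)
    · intro c hc
      by_cases hcase : m' ≤ M - 1 ∧ ξ m' ≤ c
      · filter_upwards [hprops] with x hx
        exact lt_of_lt_of_le (hx.2.2 hcase.1) hcase.2
      · have hcD : c ∈ {y : ℝ | 0 ≤ y ∧ (m' ≤ M - 1 → y < ξ m')} :=
          ⟨le_trans ht hc.le, fun hh => not_le.mp (fun hle => hcase ⟨hh, hle⟩)⟩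
        have hψc : ψ m' t < ψ m' c := hmono m' h1 h2 ht' hcD hc
        filter_upwards [hprops, hgt.eventually (eventually_lt_nhds hψc)] with x hx hx2
        by_contra hcon
        push_neg at hcon
        have hle := (hmono m' h1 h2).monotoneOn hcD ⟨hx.2.1, hx.2.2⟩ hcon
        rw [hx.1] at hle
        exact absurd hx2 (not_lt.2 hle)
  have hψinvpos : ∀ m', 1 ≤ m' → m' ≤ M → ∀ z : ℝ, 0 < z → 0 < ψinv m' z := by
    intro m' h1 h2 z hz
    obtain ⟨he, h0, hξ'⟩ := (hinv m' h1 h2).2 z hz.le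
    rcases eq_or_lt_of_le h0 with h | h
    · exfalso; rw [← h, hzero m' h1 h2] at he; exact absurd he.symm hz.ne'
    · exact h
  -- ρ facts
  have hρIoo : ∀ T : ℝ, 0 < T → ρ T ∈ Ioo (0:ℝ) (ξ 1) := by
    intro T hT
    obtain ⟨hmem, heq⟩ := hρ T hT.le
    refine ⟨?_, hmem.2⟩
    rcases eq_or_lt_of_le hmem.1 with h | h
    · exfalso
      rw [← h, mul_zero, hzero 1 le_rfl (by omega), mul_zero, add_zero] at heq
      exact absurd heq hT.ne
    · exact h
  have hρ0 : Tendsto ρ (𝓝[>] (0:ℝ)) (𝓝[Ioo (0:ℝ) (ξ 1)] 0) := by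
    rw [tendsto_nhdsWithin_iff]
    constructor
    · refine squeeze_zero' (g := fun T => T / lam 1) ?_ ?_ ?_
      · filter_upwards [self_mem_nhdsWithin] with T hT
        exact (hρIoo T hT).1.le
      · filter_upwards [self_mem_nhdsWithin] with T hT
        obtain ⟨hmem, heq⟩ := hρ T (le_of_lt hT)
        have hψ1nn : 0 ≤ ψ 1 (ρ T) := (hψprop 1 le_rfl (by omega)).2.2.1 (ρ T) hmem.1
          (fun _ => hmem.2)
        rw [le_div_iff₀ hlam1, mul_comm]
        nlinarith
      · have hid : Tendsto (fun T : ℝ => T) (𝓝[>] (0:ℝ)) (𝓝 0) :=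
          tendsto_id.mono_left nhdsWithin_le_nhds
        simpa using hid.div_const (lam 1)
    · filter_upwards [self_mem_nhdsWithin] with T hT
      exact hρIoo T hT
  have hρtop : Tendsto ρ atTop (𝓝[Ioo (0:ℝ) (ξ 1)] (ξ 1)) := by
    rw [tendsto_nhdsWithin_iff]
    constructor
    · rw [tendsto_order]
      constructor
      · intro c hc
        rcases lt_or_ge c 0 with hc0 | hc0
        · filter_upwards [eventually_gt_atTop 0] with T hT
          exact lt_trans hc0 (hρIoo T hT).1
        · filter_upwards [eventually_ge_atTop (lam 1 * ξ 1 + mu 1 * ψ 1 c + 1)] with T hT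
          have hψ1cnn : 0 ≤ ψ 1 c := (hψprop 1 le_rfl (by omega)).2.2.1 c hc0 (fun _ => hc)
          have hT0 : 0 < T := by nlinarith
          obtain ⟨hmem, heq⟩ := hρ T hT0.le
          have hlam1ρ : lam 1 * ρ T ≤ lam 1 * ξ 1 := by nlinarith [hmem.2]
          have hψlt : ψ 1 c < ψ 1 (ρ T) := by nlinarith
          exact hlt_of_ψlt 1 le_rfl (by omega) c (ρ T) ⟨hc0, fun _ => hc⟩
            ⟨hmem.1, fun _ => hmem.2⟩ hψlt
      · intro c hc
        filter_upwards [eventually_gt_atTop 0] with T hT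
        exact lt_trans (hρIoo T hT).2 hc
    · filter_upwards [eventually_gt_atTop 0] with T hT
      exact hρIoo T hT
  -- the key functions
  set Φ : ℝ → ℝ → ℝ := fun x y => ψinv m (x * ψ m y) with hΦdef
  set Den : ℝ → ℝ → ℝ := fun x y => lam 1 * (y - Φ x y) + mu 1 * (ψ 1 y - ψ 1 (Φ x y)) with hDendef
  set F : ℝ → ℝ := fun y => (Φ ε y / Φ δ y) * (Den δ y / Den ε y) with hFdef
  have hψmypos : ∀ y ∈ Ioo (0:ℝ) (ξ 1), 0 < ψ m y := fun y hy =>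
    hψpos m hm1 hmM y hy.1 (fun h => lt_of_lt_of_le hy.2 (hξchain m hm1 h).1)
  have hkey : ∀ x : ℝ, 0 < x → x < 1 → ∀ y ∈ Ioo (0:ℝ) (ξ 1),
      ψ m (Φ x y) = x * ψ m y ∧ 0 < Φ x y ∧ Φ x y < y ∧ 0 < Den x y := by
    intro x hx hx1 y hy
    have hyD : 0 ≤ y ∧ (m ≤ M - 1 → y < ξ m) :=
      ⟨hy.1.le, fun h => lt_of_lt_of_le hy.2 (hξchain m hm1 h).1⟩
    have hA : 0 < ψ m y := hψmypos y hy
    have hxA : 0 ≤ x * ψ m y := by positivity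
    obtain ⟨hψΦ, hΦ0, hΦξ⟩ := (hinv m hm1 hmM).2 (x * ψ m y) hxA
    have hΦpos : 0 < Φ x y := hψinvpos m hm1 hmM _ (mul_pos hx hA)
    have hΦlty : Φ x y < y := by
      apply hlt_of_ψlt m hm1 hmM _ _ ⟨hΦ0, hΦξ⟩ hyD
      rw [hψΦ]; nlinarith
    have hΦD1 : 0 ≤ Φ x y ∧ (1 ≤ M - 1 → Φ x y < ξ 1) := ⟨hΦ0, fun _ => lt_trans hΦlty hy.2⟩
    have hyD1 : 0 ≤ y ∧ (1 ≤ M - 1 → y < ξ 1) := ⟨hy.1.le, fun _ => hy.2⟩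
    have hψ1lt : ψ 1 (Φ x y) < ψ 1 y := hmono 1 le_rfl (by omega) hΦD1 hyD1 hΦlty
    refine ⟨hψΦ, hΦpos, hΦlty, ?_⟩
    have : 0 < lam 1 * (y - Φ x y) + mu 1 * (ψ 1 y - ψ 1 (Φ x y)) :=
      add_pos (mul_pos hlam1 (sub_pos.2 hΦlty)) (mul_pos hmu1 (sub_pos.2 hψ1lt))
    exact this
  have hGF : ∀ T : ℝ, 0 < T →
      (d * Φ ε (ρ T) / (T - lam 1 * Φ ε (ρ T) - mu 1 * ψ 1 (Φ ε (ρ T)))) /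
      (d * Φ δ (ρ T) / (T - lam 1 * Φ δ (ρ T) - mu 1 * ψ 1 (Φ δ (ρ T)))) = F (ρ T) := by
    intro T hT
    obtain ⟨hmem, heq⟩ := hρ T hT.le
    have hy := hρIoo T hT
    obtain ⟨_, hΦε, hΦlε, hDε⟩ := hkey ε hε hε1 (ρ T) hy
    obtain ⟨_, hΦδ, hΦlδ, hDδ⟩ := hkey δ hδ0 hδ (ρ T) hy
    have e1 : T - lam 1 * Φ ε (ρ T) - mu 1 * ψ 1 (Φ ε (ρ T)) = Den ε (ρ T) := by
      simp only [hDendef]; rw [mul_sub, mul_sub]; linarith [heq]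
    have e2 : T - lam 1 * Φ δ (ρ T) - mu 1 * ψ 1 (Φ δ (ρ T)) = Den δ (ρ T) := by
      simp only [hDendef]; rw [mul_sub, mul_sub]; linarith [heq]
    rw [e1, e2]
    show _ = (Φ ε (ρ T) / Φ δ (ρ T)) * (Den δ (ρ T) / Den ε (ρ T))
    field_simp
  -- limit at 0
  obtain ⟨km, hkmpos, hkmt⟩ := hkm' m hm1 hmM
  obtain ⟨k1, hk1pos, hk1t⟩ := hkm' 1 le_rfl (by omega)
  have hF0 : Tendsto F (𝓝[Ioo (0:ℝ) (ξ 1)] 0) (𝓝 (ε * (1 - δ) / (δ * (1 - ε)))) := by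
    have hl0 : 𝓝[Ioo (0:ℝ) (ξ 1)] (0:ℝ) ≤ 𝓝[>] (0:ℝ) := nhdsWithin_mono _ Ioo_subset_Ioi_self
    have hmem0 : ∀ᶠ y in 𝓝[Ioo (0:ℝ) (ξ 1)] (0:ℝ), y ∈ Ioo (0:ℝ) (ξ 1) := self_mem_nhdsWithin
    have hidl0 : Tendsto (fun y : ℝ => y) (𝓝[Ioo (0:ℝ) (ξ 1)] (0:ℝ)) (𝓝 0) :=
      tendsto_id.mono_left nhdsWithin_le_nhds
    have hratiom : Tendsto (fun y => ψ m y / y) (𝓝[Ioo (0:ℝ) (ξ 1)] (0:ℝ)) (𝓝 km) :=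
      hkmt.mono_left hl0
    -- inverse ratio
    have hinv0 : Tendsto (fun z => ψinv m z) (𝓝[>] (0:ℝ)) (𝓝[>] (0:ℝ)) := by
      rw [tendsto_nhdsWithin_iff]
      constructor
      · refine hinvt m hm1 hmM 0 le_rfl (fun h => hξpos m hm1 h) (𝓝[>] (0:ℝ)) (fun z => z) ?_ ?_
        · rw [hzero m hm1 hmM]
          exact tendsto_id.mono_left nhdsWithin_le_nhds
        · filter_upwards [self_mem_nhdsWithin] with z hz
          exact le_of_lt hz
      · filter_upwards [self_mem_nhdsWithin] with z hz
        exact hψinvpos m hm1 hmM z hz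
    have hratioinv : Tendsto (fun z => ψinv m z / z) (𝓝[>] (0:ℝ)) (𝓝 km⁻¹) := by
      have hyx : Tendsto (fun y => y / ψ m y) (𝓝[>] (0:ℝ)) (𝓝 km⁻¹) := by
        have h := hkmt.inv₀ hkmpos.ne'
        refine h.congr fun y => ?_
        rw [inv_div]
      have hcomp := hyx.comp hinv0
      refine hcomp.congr' ?_
      filter_upwards [self_mem_nhdsWithin] with z hz
      show ψinv m z / ψ m (ψinv m z) = ψinv m z / z
      rw [((hinv m hm1 hmM).2 z hz.le).1]
    -- ratios Φ x y / y and Den x y / y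
    have hmain0 : ∀ x : ℝ, 0 < x → x < 1 →
        Tendsto (fun y => Φ x y / y) (𝓝[Ioo (0:ℝ) (ξ 1)] (0:ℝ)) (𝓝 x) ∧
        Tendsto (fun y => Den x y / y) (𝓝[Ioo (0:ℝ) (ξ 1)] (0:ℝ))
          (𝓝 ((1 - x) * (lam 1 + mu 1 * k1))) := by
      intro x hx hx1
      have hX : Tendsto (fun y => x * ψ m y) (𝓝[Ioo (0:ℝ) (ξ 1)] (0:ℝ)) (𝓝[>] (0:ℝ)) := by
        rw [tendsto_nhdsWithin_iff]
        constructor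
        · have h := (hratiom.mul hidl0).const_mul x
          rw [mul_zero, mul_zero] at h
          refine h.congr' ?_
          filter_upwards [hmem0] with y hy
          show x * (ψ m y / y * y) = x * ψ m y
          rw [div_mul_cancel₀ _ (ne_of_gt hy.1)]
        · filter_upwards [hmem0] with y hy
          exact mul_pos hx (hψmypos y hy)
      have hΦr : Tendsto (fun y => Φ x y / y) (𝓝[Ioo (0:ℝ) (ξ 1)] (0:ℝ)) (𝓝 x) := by
        have hXr : Tendsto (fun y => x * ψ m y / y) (𝓝[Ioo (0:ℝ) (ξ 1)] (0:ℝ)) (𝓝 (x * km)) := by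
          have h := hratiom.const_mul x
          refine h.congr fun y => ?_
          rw [mul_div_assoc]
        have hc := (hratioinv.comp hX).mul hXr
        have heqv : km⁻¹ * (x * km) = x := by field_simp
        rw [heqv] at hc
        refine hc.congr' ?_
        filter_upwards [hmem0] with y hy
        have hAy : 0 < x * ψ m y := mul_pos hx (hψmypos y hy)
        show ψinv m (x * ψ m y) / (x * ψ m y) * (x * ψ m y / y) = Φ x y / y
        rw [div_mul_div_comm, mul_comm (x * ψ m y) y, mul_div_mul_right _ _ hAy.ne']
      have hΦ0t : Tendsto (fun y => Φ x y) (𝓝[Ioo (0:ℝ) (ξ 1)] (0:ℝ)) (𝓝[>] (0:ℝ)) := by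
        rw [tendsto_nhdsWithin_iff]
        constructor
        · have h := hΦr.mul hidl0
          rw [mul_zero] at h
          refine h.congr' ?_
          filter_upwards [hmem0] with y hy
          show Φ x y / y * y = Φ x y
          rw [div_mul_cancel₀ _ (ne_of_gt hy.1)]
        · filter_upwards [hmem0] with y hy
          exact (hkey x hx hx1 y hy).2.1
      have hψ1Φr : Tendsto (fun y => ψ 1 (Φ x y) / y) (𝓝[Ioo (0:ℝ) (ξ 1)] (0:ℝ)) (𝓝 (k1 * x)) := by
        have h := (hk1t.comp hΦ0t).mul hΦr
        refine h.congr' ?_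
        filter_upwards [hmem0] with y hy
        have hΦpos := (hkey x hx hx1 y hy).2.1
        show ψ 1 (Φ x y) / Φ x y * (Φ x y / y) = ψ 1 (Φ x y) / y
        rw [div_mul_div_comm, mul_comm (Φ x y) y, mul_div_mul_right _ _ hΦpos.ne']
      refine ⟨hΦr, ?_⟩
      have hψ1yr : Tendsto (fun y => ψ 1 y / y) (𝓝[Ioo (0:ℝ) (ξ 1)] (0:ℝ)) (𝓝 k1) :=
        hk1t.mono_left hl0
      have hcomb : Tendsto
          (fun y => lam 1 * (1 - Φ x y / y) + mu 1 * (ψ 1 y / y - ψ 1 (Φ x y) / y))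
          (𝓝[Ioo (0:ℝ) (ξ 1)] (0:ℝ))
          (𝓝 (lam 1 * (1 - x) + mu 1 * (k1 - k1 * x))) :=
        ((tendsto_const_nhds.sub hΦr).const_mul (lam 1)).add
          ((hψ1yr.sub hψ1Φr).const_mul (mu 1))
      have heqv : lam 1 * (1 - x) + mu 1 * (k1 - k1 * x) = (1 - x) * (lam 1 + mu 1 * k1) := by ring
      rw [heqv] at hcomb
      refine hcomb.congr' ?_
      filter_upwards [hmem0] with y hy
      have hy0 : y ≠ 0 := ne_of_gt hy.1
      show lam 1 * (1 - Φ x y / y) + mu 1 * (ψ 1 y / y - ψ 1 (Φ x y) / y) = Den x y / y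
      simp only [hDendef]
      field_simp
    obtain ⟨hΦε, hDε⟩ := hmain0 ε hε hε1
    obtain ⟨hΦδ, hDδ⟩ := hmain0 δ hδ0 hδ
    have hQ : 0 < lam 1 + mu 1 * k1 := by positivity
    have hPδ : (0:ℝ) < (1 - δ) * (lam 1 + mu 1 * k1) := mul_pos (by linarith) hQ
    have hPε : (0:ℝ) < (1 - ε) * (lam 1 + mu 1 * k1) := mul_pos (by linarith) hQ
    have hT : Tendsto
        (fun y => (Φ ε y / y) / (Φ δ y / y) * ((Den δ y / y) / (Den ε y / y)))
        (𝓝[Ioo (0:ℝ) (ξ 1)] (0:ℝ))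
        (𝓝 ((ε / δ) * (((1 - δ) * (lam 1 + mu 1 * k1)) / ((1 - ε) * (lam 1 + mu 1 * k1))))) :=
      (hΦε.div hΦδ hδ0.ne').mul (hDδ.div hDε hPε.ne')
    have heqv : (ε / δ) * (((1 - δ) * (lam 1 + mu 1 * k1)) / ((1 - ε) * (lam 1 + mu 1 * k1)))
        = ε * (1 - δ) / (δ * (1 - ε)) := by
      rw [mul_div_mul_right _ _ hQ.ne', div_mul_div_comm]
    rw [heqv] at hT
    refine hT.congr' ?_
    filter_upwards [hmem0] with y hy
    have hy0 : y ≠ 0 := ne_of_gt hy.1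
    have hcanc : ∀ p q : ℝ, (p / y) / (q / y) = p / q := by
      intro p q
      rcases eq_or_ne q 0 with h | h
      · simp [h]
      · rw [div_div_div_comm, div_self hy0, div_one]
    show (Φ ε y / y) / (Φ δ y / y) * ((Den δ y / y) / (Den ε y / y)) = F y
    simp only [hFdef]
    rw [hcanc, hcanc]
  -- limits at ξ 1
  have hmem1 : ∀ᶠ y in 𝓝[Ioo (0:ℝ) (ξ 1)] (ξ 1), y ∈ Ioo (0:ℝ) (ξ 1) := self_mem_nhdsWithin
  have hidl1 : Tendsto (fun y : ℝ => y) (𝓝[Ioo (0:ℝ) (ξ 1)] (ξ 1)) (𝓝 (ξ 1)) :=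
    tendsto_id.mono_left nhdsWithin_le_nhds
  have htop1 : Tendsto (ψ 1) (𝓝[Ioo (0:ℝ) (ξ 1)] (ξ 1)) atTop :=
    (hψtop 1 le_rfl hM1).mono_left (nhdsWithin_mono _ Ioo_subset_Iio_self)
  have hinvψ1 : Tendsto (fun y => (ψ 1 y)⁻¹) (𝓝[Ioo (0:ℝ) (ξ 1)] (ξ 1)) (𝓝 0) :=
    htop1.inv_tendsto_atTop
  have hψ1ne : ∀ᶠ y in 𝓝[Ioo (0:ℝ) (ξ 1)] (ξ 1), ψ 1 y ≠ 0 := by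
    filter_upwards [htop1.eventually (eventually_ge_atTop 1)] with y hy
    intro h; rw [h] at hy; linarith
  have hFsplit : ∀ L1 L2 : ℝ, Tendsto (fun y => Φ ε y / Φ δ y) (𝓝[Ioo (0:ℝ) (ξ 1)] (ξ 1)) (𝓝 L1) →
      Tendsto (fun y => (Den δ y / ψ 1 y) / (Den ε y / ψ 1 y)) (𝓝[Ioo (0:ℝ) (ξ 1)] (ξ 1)) (𝓝 L2) →
      Tendsto F (𝓝[Ioo (0:ℝ) (ξ 1)] (ξ 1)) (𝓝 (L1 * L2)) := by
    intro L1 L2 h1 h2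
    refine (h1.mul h2).congr' ?_
    filter_upwards [hψ1ne] with y hne
    show Φ ε y / Φ δ y * ((Den δ y / ψ 1 y) / (Den ε y / ψ 1 y)) = F y
    simp only [hFdef]
    congr 1
    rcases eq_or_ne (Den ε y) 0 with h | h
    · simp [h]
    · rw [div_div_div_comm, div_self hne, div_one]
  have hψ1cont : ∀ β : ℝ, 0 ≤ β → β < ξ 1 → ∀ g : ℝ → ℝ,
      Tendsto g (𝓝[Ioo (0:ℝ) (ξ 1)] (ξ 1)) (𝓝 β) → (∀ᶠ y in 𝓝[Ioo (0:ℝ) (ξ 1)] (ξ 1), 0 ≤ g y) →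
      Tendsto (fun y => ψ 1 (g y)) (𝓝[Ioo (0:ℝ) (ξ 1)] (ξ 1)) (𝓝 (ψ 1 β)) := by
    intro β hβ0 hβ1 g hg hg0
    have hβD : β ∈ {y : ℝ | 0 ≤ y ∧ (1 ≤ M - 1 → y < ξ 1)} := ⟨hβ0, fun _ => hβ1⟩
    have hcw := ((hcont 1 le_rfl (by omega)) β hβD).tendsto
    refine hcw.comp ?_
    rw [tendsto_nhdsWithin_iff]
    refine ⟨hg, ?_⟩
    filter_upwards [hg0, hg.eventually (eventually_lt_nhds hβ1)] with y h1 h2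
    exact ⟨h1, fun _ => h2⟩
  have hDenψ : ∀ x : ℝ, 0 < x → x < 1 → ∀ β γ : ℝ,
      Tendsto (fun y => Φ x y) (𝓝[Ioo (0:ℝ) (ξ 1)] (ξ 1)) (𝓝 β) →
      Tendsto (fun y => ψ 1 (Φ x y)) (𝓝[Ioo (0:ℝ) (ξ 1)] (ξ 1)) (𝓝 γ) →
      Tendsto (fun y => Den x y / ψ 1 y) (𝓝[Ioo (0:ℝ) (ξ 1)] (ξ 1)) (𝓝 (mu 1)) := by
    intro x hx hx1 β γ hβ hγ
    have h1 : Tendsto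
        (fun y => lam 1 * (y - Φ x y) * (ψ 1 y)⁻¹ + mu 1 * (1 - ψ 1 (Φ x y) * (ψ 1 y)⁻¹))
        (𝓝[Ioo (0:ℝ) (ξ 1)] (ξ 1))
        (𝓝 (lam 1 * (ξ 1 - β) * 0 + mu 1 * (1 - γ * 0))) :=
      (((hidl1.sub hβ).const_mul (lam 1)).mul hinvψ1).add
        ((tendsto_const_nhds.sub (hγ.mul hinvψ1)).const_mul (mu 1))
    have heqv : lam 1 * (ξ 1 - β) * 0 + mu 1 * (1 - γ * 0) = mu 1 := by ring
    rw [heqv] at h1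
    refine h1.congr' ?_
    filter_upwards [hψ1ne] with y hne
    show lam 1 * (y - Φ x y) * (ψ 1 y)⁻¹ + mu 1 * (1 - ψ 1 (Φ x y) * (ψ 1 y)⁻¹) = Den x y / ψ 1 y
    simp only [hDendef]
    field_simp
  refine ⟨?_, ?_, ?_, ?_⟩
  · -- T → 0⁺
    refine (hF0.comp hρ0).congr' ?_
    filter_upwards [self_mem_nhdsWithin] with T hT
    exact (hGF T hT).symm
  · -- m = 1
    intro hm'
    have hΦ1 : ∀ x : ℝ, 0 < x → x < 1 →
        Tendsto (fun y => Φ x y) (𝓝[Ioo (0:ℝ) (ξ 1)] (ξ 1)) (𝓝 (ξ 1)) ∧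
        (∀ᶠ y in 𝓝[Ioo (0:ℝ) (ξ 1)] (ξ 1), ψ 1 (Φ x y) = x * ψ 1 y) := by
      intro x hx hx1
      have hψeq : ∀ᶠ y in 𝓝[Ioo (0:ℝ) (ξ 1)] (ξ 1), ψ 1 (Φ x y) = x * ψ 1 y := by
        filter_upwards [hmem1] with y hy
        have h := (hkey x hx hx1 y hy).1
        rw [hm'] at h
        exact h
      refine ⟨?_, hψeq⟩
      rw [tendsto_order]
      constructor
      · intro c hc
        rcases lt_or_ge c 0 with hc0 | hc0
        · filter_upwards [hmem1] with y hy
          exact lt_trans hc0 (hkey x hx hx1 y hy).2.1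
        · have hψΦtop : Tendsto (fun y => ψ 1 (Φ x y)) (𝓝[Ioo (0:ℝ) (ξ 1)] (ξ 1)) atTop := by
            refine (htop1.const_mul_atTop hx).congr' ?_
            filter_upwards [hψeq] with y h
            exact h.symm
          filter_upwards [hψΦtop.eventually (eventually_gt_atTop (ψ 1 c)), hmem1] with y h1 hy
          have hΦy := hkey x hx hx1 y hy
          exact hlt_of_ψlt 1 le_rfl (by omega) c (Φ x y) ⟨hc0, fun _ => hc⟩
            ⟨le_of_lt hΦy.2.1, fun _ => lt_trans hΦy.2.2.1 hy.2⟩ h1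
      · intro c hc
        filter_upwards [hmem1] with y hy
        exact lt_trans (lt_trans (hkey x hx hx1 y hy).2.2.1 hy.2) hc
    have hDen1r : ∀ x : ℝ, 0 < x → x < 1 →
        Tendsto (fun y => Den x y / ψ 1 y) (𝓝[Ioo (0:ℝ) (ξ 1)] (ξ 1)) (𝓝 (mu 1 * (1 - x))) := by
      intro x hx hx1
      obtain ⟨hΦlim, hψeq⟩ := hΦ1 x hx hx1
      have h1 : Tendsto (fun y => lam 1 * (y - Φ x y) * (ψ 1 y)⁻¹ + mu 1 * (1 - x)) (𝓝[Ioo (0:ℝ) (ξ 1)] (ξ 1))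
          (𝓝 (lam 1 * (ξ 1 - ξ 1) * 0 + mu 1 * (1 - x))) :=
        (((hidl1.sub hΦlim).const_mul (lam 1)).mul hinvψ1).add tendsto_const_nhds
      have heqv : lam 1 * (ξ 1 - ξ 1) * 0 + mu 1 * (1 - x) = mu 1 * (1 - x) := by ring
      rw [heqv] at h1
      refine h1.congr' ?_
      filter_upwards [hψ1ne, hψeq] with y hne heq
      show lam 1 * (y - Φ x y) * (ψ 1 y)⁻¹ + mu 1 * (1 - x) = Den x y / ψ 1 y
      simp only [hDendef]
      rw [heq]
      field_simp
    have hL1 : Tendsto (fun y => Φ ε y / Φ δ y) (𝓝[Ioo (0:ℝ) (ξ 1)] (ξ 1)) (𝓝 ((ξ 1) / (ξ 1))) :=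
      ((hΦ1 ε hε hε1).1).div ((hΦ1 δ hδ0 hδ).1) hξ1pos.ne'
    have hL2 : Tendsto (fun y => (Den δ y / ψ 1 y) / (Den ε y / ψ 1 y)) (𝓝[Ioo (0:ℝ) (ξ 1)] (ξ 1))
        (𝓝 ((mu 1 * (1 - δ)) / (mu 1 * (1 - ε)))) :=
      (hDen1r δ hδ0 hδ).div (hDen1r ε hε hε1) (mul_pos hmu1 (by linarith)).ne'
    have hFlim := hFsplit _ _ hL1 hL2
    have heqv : (ξ 1 / ξ 1) * ((mu 1 * (1 - δ)) / (mu 1 * (1 - ε))) = (1 - δ) / (1 - ε) := by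
      rw [div_self hξ1pos.ne', one_mul, mul_div_mul_left _ _ hmu1.ne']
    rw [heqv] at hFlim
    refine (hFlim.comp hρtop).congr' ?_
    filter_upwards [eventually_gt_atTop 0] with T hT
    exact (hGF T hT).symm
  · -- 1 < m < M
    intro h1m hmM'
    have hmid : ∀ x : ℝ, 0 < x → x < 1 →
        Tendsto (fun y => Φ x y) (𝓝[Ioo (0:ℝ) (ξ 1)] (ξ 1)) (𝓝 (ψinv m (x * ψ m (ξ 1)))) ∧
        0 < ψinv m (x * ψ m (ξ 1)) ∧ ψinv m (x * ψ m (ξ 1)) < ξ 1 := by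
      intro x hx hx1
      have hmle : m ≤ M - 1 := by omega
      have hξ1m : ξ 1 < ξ m := (hξchain m hm1 hmle).2 (by omega)
      have hξ1Dm : (0:ℝ) ≤ ξ 1 ∧ (m ≤ M - 1 → ξ 1 < ξ m) := ⟨hξ1pos.le, fun _ => hξ1m⟩
      have hψmξ1pos : 0 < ψ m (ξ 1) := hψpos m hm1 hmM (ξ 1) hξ1pos (fun _ => hξ1m)
      have hxA : (0:ℝ) ≤ x * ψ m (ξ 1) := (mul_pos hx hψmξ1pos).le
      obtain ⟨hψt, ht0, htξ⟩ := (hinv m hm1 hmM).2 _ hxA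
      have htpos : 0 < ψinv m (x * ψ m (ξ 1)) := hψinvpos m hm1 hmM _ (mul_pos hx hψmξ1pos)
      have htlt1 : ψinv m (x * ψ m (ξ 1)) < ξ 1 := by
        apply hlt_of_ψlt m hm1 hmM _ _ ⟨ht0, htξ⟩ hξ1Dm
        rw [hψt]; nlinarith
      have hψmc : Tendsto (fun y => x * ψ m y) (𝓝[Ioo (0:ℝ) (ξ 1)] (ξ 1)) (𝓝 (ψ m (ψinv m (x * ψ m (ξ 1))))) := by
        rw [hψt]
        refine Tendsto.const_mul x ?_
        have hcm := ((hcont m hm1 hmM) (ξ 1) hξ1Dm).tendsto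
        refine hcm.comp ?_
        rw [tendsto_nhdsWithin_iff]
        refine ⟨hidl1, ?_⟩
        filter_upwards [hmem1] with y hy
        exact ⟨hy.1.le, fun h => lt_of_lt_of_le hy.2 (hξchain m hm1 h).1⟩
      have hΦlim := hinvt m hm1 hmM _ ht0 htξ (𝓝[Ioo (0:ℝ) (ξ 1)] (ξ 1)) _ hψmc
        (by filter_upwards [hmem1] with y hy; exact (mul_pos hx (hψmypos y hy)).le)
      exact ⟨hΦlim, htpos, htlt1⟩
    obtain ⟨hΦε, htε, hεlt⟩ := hmid ε hε hε1
    obtain ⟨hΦδ, htδ, hδlt⟩ := hmid δ hδ0 hδ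
    have hnnε : ∀ᶠ y in 𝓝[Ioo (0:ℝ) (ξ 1)] (ξ 1), 0 ≤ Φ ε y := by
      filter_upwards [hmem1] with y hy; exact (hkey ε hε hε1 y hy).2.1.le
    have hnnδ : ∀ᶠ y in 𝓝[Ioo (0:ℝ) (ξ 1)] (ξ 1), 0 ≤ Φ δ y := by
      filter_upwards [hmem1] with y hy; exact (hkey δ hδ0 hδ y hy).2.1.le
    have hψ1ε := hψ1cont _ htε.le hεlt _ hΦε hnnε
    have hψ1δ := hψ1cont _ htδ.le hδlt _ hΦδ hnnδ
    have hDε := hDenψ ε hε hε1 _ _ hΦε hψ1ε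
    have hDδ := hDenψ δ hδ0 hδ _ _ hΦδ hψ1δ
    have hL1 : Tendsto (fun y => Φ ε y / Φ δ y) (𝓝[Ioo (0:ℝ) (ξ 1)] (ξ 1))
        (𝓝 (ψinv m (ε * ψ m (ξ 1)) / ψinv m (δ * ψ m (ξ 1)))) := hΦε.div hΦδ htδ.ne'
    have hL2 : Tendsto (fun y => (Den δ y / ψ 1 y) / (Den ε y / ψ 1 y)) (𝓝[Ioo (0:ℝ) (ξ 1)] (ξ 1))
        (𝓝 (mu 1 / mu 1)) := hDδ.div hDε hmu1.ne'
    have hFlim := hFsplit _ _ hL1 hL2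
    rw [div_self hmu1.ne', mul_one] at hFlim
    refine (hFlim.comp hρtop).congr' ?_
    filter_upwards [eventually_gt_atTop 0] with T hT
    exact (hGF T hT).symm
  · -- m = M
    intro hm'
    have hψinvM : ∀ z : ℝ, 0 ≤ z → ψinv m z = z := by
      intro z hz
      have h := ((hinv m hm1 hmM).2 z hz).1
      rw [hm', hψM] at h
      rw [hm']
      exact h
    have hΦlim : ∀ x : ℝ, 0 < x → Tendsto (fun y => Φ x y) (𝓝[Ioo (0:ℝ) (ξ 1)] (ξ 1)) (𝓝 (x * ξ 1)) := by
      intro x hx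
      have h := hidl1.const_mul x
      refine h.congr' ?_
      filter_upwards [hmem1] with y hy
      have e : ψ m y = y := by rw [hm']; exact hψM y
      show x * y = ψinv m (x * ψ m y)
      rw [e, hψinvM (x * y) (mul_nonneg hx.le hy.1.le)]
    have hβε : ε * ξ 1 < ξ 1 := by nlinarith
    have hβδ : δ * ξ 1 < ξ 1 := by nlinarith
    have hnnε : ∀ᶠ y in 𝓝[Ioo (0:ℝ) (ξ 1)] (ξ 1), 0 ≤ Φ ε y := by
      filter_upwards [hmem1] with y hy; exact (hkey ε hε hε1 y hy).2.1.le
    have hnnδ : ∀ᶠ y in 𝓝[Ioo (0:ℝ) (ξ 1)] (ξ 1), 0 ≤ Φ δ y := by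
      filter_upwards [hmem1] with y hy; exact (hkey δ hδ0 hδ y hy).2.1.le
    have hψ1ε := hψ1cont _ (mul_nonneg hε.le hξ1pos.le) hβε _ (hΦlim ε hε) hnnε
    have hψ1δ := hψ1cont _ (mul_nonneg hδ0.le hξ1pos.le) hβδ _ (hΦlim δ hδ0) hnnδ
    have hDε := hDenψ ε hε hε1 _ _ (hΦlim ε hε) hψ1ε
    have hDδ := hDenψ δ hδ0 hδ _ _ (hΦlim δ hδ0) hψ1δ
    have hL1 : Tendsto (fun y => Φ ε y / Φ δ y) (𝓝[Ioo (0:ℝ) (ξ 1)] (ξ 1)) (𝓝 ((ε * ξ 1) / (δ * ξ 1))) :=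
      (hΦlim ε hε).div (hΦlim δ hδ0) (mul_pos hδ0 hξ1pos).ne'
    have hL2 : Tendsto (fun y => (Den δ y / ψ 1 y) / (Den ε y / ψ 1 y)) (𝓝[Ioo (0:ℝ) (ξ 1)] (ξ 1))
        (𝓝 (mu 1 / mu 1)) := hDδ.div hDε hmu1.ne'
    have hFlim := hFsplit _ _ hL1 hL2
    have heqv : (ε * ξ 1) / (δ * ξ 1) * (mu 1 / mu 1) = ε / δ := by
      rw [div_self hmu1.ne', mul_one, mul_div_mul_right _ _ hξ1pos.ne']
    rw [heqv] at hFlim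
    refine (hFlim.comp hρtop).congr' ?_
    filter_upwards [eventually_gt_atTop 0] with T hT
    exact (hGF T hT).symm
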